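/- A language L ⊆ Σ* over a finite alphabet Σ is regular (recognized by some deterministic finite automaton) if and only if L is recognized by some language model with finite context, where an LM (Γ, δ, C) with Σ ⊆ Γ, a designated start token, and a designated accepting subset F ⊆ Γ recognizes a word w = a₁…aₙ when the alternating process that appends each input symbol aᵢ and then the LM's generated token ends with a generated token in F. -/
import Mathlib


/-- Appending a token to a finite context window of length `C`, retaining the most recent `C`
tokens: `(t₁, …, t_C) ↦ (t₂, …, t_C, a)`. -/
def pushToken {Γ : Type} {C : ℕ} (ctx : Fin C → Γ) (a : Γ) : Fin C → Γ :=
  fun i => if h : (i : ℕ) + 1 < C then ctx ⟨(i : ℕ) + 1, h⟩ else a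

/-- The context of the LM `(Γ, δ, C)` after the alternating process on input word `w`: starting
from the context filled with the designated start token, for each input symbol `a` the (embedded)
symbol `ι a` is appended and then the LM's generated token is appended. -/
def lmProcess {A Γ : Type} {C : ℕ} (δ : (Fin C → Γ) → Γ) (ι : A → Γ) (start : Γ)
    (w : List A) : Fin C → Γ :=
  w.foldl (fun ctx a =>
    let ctx' := pushToken ctx (ι a)
    pushToken ctx' (δ ctx')) (fun _ => start)

/-- The LM `(Γ, δ, C)` (with `Σ ⊆ Γ` via `ι`, start token `start`, accepting tokens `F`)
recognizes `w` when the alternating process ends with a (generated) token in `F`, i.e. the most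
recent token of the final context lies in `F`. -/
def lmRecognizes {A Γ : Type} {C : ℕ} (hC : 0 < C) (δ : (Fin C → Γ) → Γ) (ι : A → Γ)
    (start : Γ) (F : Set Γ) (w : List A) : Prop :=
  lmProcess δ ι start w ⟨C - 1, by omega⟩ ∈ F


def lmDelta {A σ : Type} (M : DFA A σ) : (Fin 2 → A ⊕ σ) → A ⊕ σ := fun ctx =>
  match ctx 1, ctx 0 with
  | Sum.inl a, Sum.inr s => Sum.inr (M.step s a)
  | Sum.inl a, Sum.inl _ => Sum.inr (M.step M.start a)
  | Sum.inr _, _ => Sum.inr M.start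

lemma lmDelta_key {A σ : Type} (M : DFA A σ) (w : List A) :
    lmProcess (lmDelta M) (Sum.inl : A → A ⊕ σ) (Sum.inr M.start) w 1
      = Sum.inr (M.eval w) := by
  induction w using List.reverseRecOn with
  | nil => rfl
  | append_singleton w a ih =>
    unfold lmProcess at ih ⊢
    rw [List.foldl_append, List.foldl_cons, List.foldl_nil]
    simp only []
    set ctx := List.foldl (fun ctx a =>
      let ctx' := pushToken ctx (Sum.inl a)
      pushToken ctx' (lmDelta M ctx')) (fun _ => Sum.inr M.start) w with hctx
    have h1 : pushToken (pushToken ctx (Sum.inl a))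
        (lmDelta M (pushToken ctx (Sum.inl a))) 1 = lmDelta M (pushToken ctx (Sum.inl a)) := by
      simp [pushToken]
    rw [h1]
    have h2 : pushToken ctx (Sum.inl a) 1 = Sum.inl a := by simp [pushToken]
    have h3 : pushToken ctx (Sum.inl a) 0 = ctx 1 := by simp [pushToken]
    unfold lmDelta
    rw [h2, h3, ih, DFA.eval_append_singleton]

/--
A language `L ⊆ Σ*` over a finite alphabet `Σ` is regular (recognized by some
deterministic finite automaton) if and only if `L` is recognized by some language model with
finite context, where an LM `(Γ, δ, C)` with `Σ ⊆ Γ` (an injection `ι : Σ → Γ`), a designated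
start token, and a designated accepting subset `F ⊆ Γ` recognizes a word `w = a₁…aₙ` when the
alternating process that appends each input symbol `aᵢ` and then the LM's generated token ends
with a generated token in `F`.
-/
theorem stmt_2 (A : Type) [Fintype A] (L : Language A) :
    L.IsRegular ↔
      ∃ (Γ : Type) (_ : Fintype Γ) (C : ℕ) (hC : 0 < C) (δ : (Fin C → Γ) → Γ)
        (ι : A → Γ) (_ : Function.Injective ι) (start : Γ) (F : Set Γ),
        ∀ w : List A, w ∈ L ↔ lmRecognizes hC δ ι start F w := by
  constructor
  · rintro ⟨σ, _, M, rfl⟩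
    classical
    refine ⟨A ⊕ σ, inferInstance, 2, by norm_num, lmDelta M,
      Sum.inl, Sum.inl_injective, Sum.inr M.start, Sum.inr '' M.accept, fun w => ?_⟩
    have : (⟨2 - 1, by omega⟩ : Fin 2) = 1 := rfl
    rw [DFA.mem_accepts, lmRecognizes, this, lmDelta_key]
    constructor
    · intro h; exact ⟨_, h, rfl⟩
    · rintro ⟨s, hs, hsEq⟩; rwa [← Sum.inr_injective hsEq]
  · rintro ⟨Γ, _, C, hC, δ, ι, hι, start, F, h⟩
    classical
    refine ⟨Fin C → Γ, inferInstance,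
      ⟨fun ctx a => pushToken (pushToken ctx (ι a)) (δ (pushToken ctx (ι a))),
        fun _ => start, {ctx | ctx ⟨C - 1, by omega⟩ ∈ F}⟩, ?_⟩
    ext w
    rw [DFA.mem_accepts]
    exact (h w).symm
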